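/- arXiv:2112.13698 — 2 statements merged into one kernel-verified Lean document; each statement's English description precedes it below -/
import Mathlib

section
/- Let M be an m×n complex matrix such that every column of M lies in the span of the columns of G (equivalently, the range of M, viewed as a linear map ℂⁿ → ℂᵐ, is contained in the range of G). Then for every x ∈ ℂⁿ and λ ∈ ℂ, if Qᴴ·(M·x) = λ·(R·x) then M·x = λ·(G·x). (That is, when the columns of M lie in the column space of G, the square projected problem QᴴM x = λ R x implies the rectangular problem M x = λ G x.) -/
open Matrix

/-- If every column of `M` lies in the column space of `G` (i.e. the range of
`M` as a linear map is contained in the range of `G`), then every solution of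
the square projected problem `Qᴴ M x = λ R x` also solves the rectangular
problem `M x = λ G x`, given a QR factorization `G = Q R` with `Qᴴ Q = I` and
`R` invertible upper triangular. -/
theorem projected_implies_rect_eig
    (m n : ℕ) (hm : 0 < m) (hn : 0 < n) (hmn : n ≤ m)
    (G Q : Matrix (Fin m) (Fin n) ℂ)
    (R : Matrix (Fin n) (Fin n) ℂ)
    (hQ : Qᴴ * Q = 1)
    (hRtri : R.BlockTriangular id)
    (hRinv : IsUnit R)
    (hQR : G = Q * R)
    (M : Matrix (Fin m) (Fin n) ℂ)
    (hrange : LinearMap.range M.mulVecLin ≤ LinearMap.range G.mulVecLin) :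
    ∀ (x : Fin n → ℂ) (lam : ℂ),
      Qᴴ.mulVec (M.mulVec x) = lam • R.mulVec x →
      M.mulVec x = lam • G.mulVec x := by
  intro x lam hproj
  obtain ⟨y, hy⟩ := hrange ⟨x, rfl⟩
  simp only [mulVecLin_apply] at hy
  have hMx : M.mulVec x = Q.mulVec (R.mulVec y) := by
    rw [← hy, hQR, ← mulVec_mulVec]
  have hRy : R.mulVec y = lam • R.mulVec x := by
    calc R.mulVec y = (Qᴴ * Q).mulVec (R.mulVec y) := by rw [hQ, one_mulVec]
    _ = Qᴴ.mulVec (M.mulVec x) := by rw [← mulVec_mulVec, ← hMx]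
    _ = lam • R.mulVec x := hproj
  rw [hMx, hRy, mulVec_smul, hQR, ← mulVec_mulVec]
end

section
/- Let M be an m×n complex matrix, B a μ×m complex matrix with 0 < μ < n, and let Q₋ denote the m×(n−μ) matrix formed by the first n−μ columns of Q. Then for x ∈ ℂⁿ and λ ∈ ℂ, the pair of conditions (Q₋ᴴ·(M·x) = λ·(Q₋ᴴ·G·x) and (B·G)·x = 0) holds if and only if (B·G)·x = 0 and the residual M·x − λ·(G·x) is orthogonal (in the standard Hermitian inner product on ℂᵐ) to each of the first n−μ columns of G. (That is, the squared-up system with boundary rows enforces the boundary conditions exactly while requiring the residual to be orthogonal to the range of the first n−μ columns of G.) -/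
open Matrix

/-- Auxiliary: the top-left block of an invertible upper triangular matrix is a unit. -/
lemma aux_topleft_isUnit {n ν : ℕ} (hνn : ν ≤ n) (R : Matrix (Fin n) (Fin n) ℂ)
    (hRtri : R.BlockTriangular id) (hRinv : IsUnit R) :
    IsUnit (R.submatrix (Fin.castLE hνn) (Fin.castLE hνn)) := by
  have htri : (R.submatrix (Fin.castLE hνn) (Fin.castLE hνn)).BlockTriangular id := by
    intro i j hij
    exact hRtri (by simpa using hij)
  rw [Matrix.isUnit_iff_isUnit_det] at hRinv ⊢
  rw [Matrix.det_of_upperTriangular hRtri] at hRinv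
  rw [Matrix.det_of_upperTriangular htri]
  simp only [isUnit_iff_ne_zero, Finset.prod_ne_zero_iff] at hRinv ⊢
  intro i _
  exact hRinv (Fin.castLE hνn i) (Finset.mem_univ _)

/-- Auxiliary: first `ν` columns of `Q * R` equal `Q₋ * R₀` when `R` is upper triangular. -/
lemma aux_cols_QR {m n ν : ℕ} (hνn : ν ≤ n) (Q : Matrix (Fin m) (Fin n) ℂ)
    (R : Matrix (Fin n) (Fin n) ℂ) (hRtri : R.BlockTriangular id) :
    (Q * R).submatrix id (Fin.castLE hνn) =
      Q.submatrix id (Fin.castLE hνn) * R.submatrix (Fin.castLE hνn) (Fin.castLE hνn) := by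
  ext i j
  simp only [Matrix.submatrix_apply, Matrix.mul_apply, id]
  have hemb : Function.Injective (Fin.castLE hνn (n := ν)) := Fin.castLE_injective _
  have hsub := Finset.sum_subset (s₁ := Finset.univ.map ⟨Fin.castLE hνn, hemb⟩)
    (f := fun k => Q i k * R k (Fin.castLE hνn j)) (Finset.subset_univ _) ?_
  · rw [← hsub, Finset.sum_map]
    simp
  intro k _ hk
  have hkν : ¬ (k : ℕ) < ν := by
    intro hlt
    exact hk (by simp [Finset.mem_map]; exact ⟨⟨(k : ℕ), hlt⟩, by ext; simp⟩)
  have : R k (Fin.castLE hνn j) = 0 := by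
    apply hRtri
    simp only [id]
    rw [Fin.lt_def]
    simp only [Fin.coe_castLE]
    exact lt_of_lt_of_le j.isLt (le_of_not_gt hkν)
  simp [this]

/-- With `μ` boundary conditions `B G x = 0` (`0 < μ < n`) and `Q₋` the first
`n - μ` columns of `Q`, the squared-up system
`Q₋ᴴ M x = λ Q₋ᴴ G x  and  B G x = 0`
holds iff the boundary conditions hold exactly and the residual `M x - λ G x`
is orthogonal (standard Hermitian inner product on ℂᵐ) to each of the first
`n - μ` columns of `G`, given a QR factorization `G = Q R` with `Qᴴ Q = I`
and `R` invertible upper triangular. -/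
theorem squared_up_iff_bc_and_orthogonality
    (m n μ : ℕ) (hm : 0 < m) (hn : 0 < n) (hmn : n ≤ m)
    (hμ : 0 < μ) (hμn : μ < n)
    (G Q : Matrix (Fin m) (Fin n) ℂ)
    (R : Matrix (Fin n) (Fin n) ℂ)
    (hQ : Qᴴ * Q = 1)
    (hRtri : R.BlockTriangular id)
    (hRinv : IsUnit R)
    (hQR : G = Q * R)
    (M : Matrix (Fin m) (Fin n) ℂ)
    (B : Matrix (Fin μ) (Fin m) ℂ)
    (Qminus : Matrix (Fin m) (Fin (n - μ)) ℂ)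
    (hQminus : Qminus = Q.submatrix id (Fin.castLE (Nat.sub_le n μ)))
    (x : Fin n → ℂ) (lam : ℂ) :
    (Qminusᴴ.mulVec (M.mulVec x) = lam • (Qminusᴴ * G).mulVec x ∧
        (B * G).mulVec x = 0) ↔
      ((B * G).mulVec x = 0 ∧
        ∀ j : Fin (n - μ),
          star (M.mulVec x - lam • G.mulVec x) ⬝ᵥ
            (fun i : Fin m => G i (Fin.castLE (Nat.sub_le n μ) j)) = 0) := by
  set c := Fin.castLE (Nat.sub_le n μ) with hc
  set r : Fin m → ℂ := M.mulVec x - lam • G.mulVec x with hr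
  set R₀ := R.submatrix c c with hR₀def
  set Gminus := G.submatrix id c with hGm
  -- LHS first conjunct ↔ Qminusᴴ *ᵥ r = 0
  have h1 : (Qminusᴴ.mulVec (M.mulVec x) = lam • (Qminusᴴ * G).mulVec x) ↔
      Qminusᴴ.mulVec r = 0 := by
    rw [hr, Matrix.mulVec_sub, Matrix.mulVec_smul, ← Matrix.mulVec_mulVec, sub_eq_zero]
  -- RHS second conjunct ↔ Gminusᴴ *ᵥ r = 0
  have h2 : (∀ j : Fin (n - μ),
      star r ⬝ᵥ (fun i : Fin m => G i (c j)) = 0) ↔ Gminusᴴ.mulVec r = 0 := by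
    constructor
    · intro h
      funext j
      simp only [Pi.zero_apply]
      have := h j
      rw [← star_eq_zero (R := ℂ)] at this
      rw [← this]
      simp [Matrix.mulVec, dotProduct, hGm, Finset.mul_sum, mul_comm]
    · intro h j
      have : Gminusᴴ.mulVec r j = 0 := by rw [h]; simp
      rw [← star_eq_zero (R := ℂ)] at this
      rw [← this]
      simp [Matrix.mulVec, dotProduct, hGm, Finset.mul_sum, mul_comm]
  -- Gminus = Qminus * R₀
  have hfac : Gminus = Qminus * R₀ := by
    rw [hGm, hQR, hQminus, hR₀def]
    exact aux_cols_QR (Nat.sub_le n μ) Q R hRtri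
  have hR₀ : IsUnit R₀ := aux_topleft_isUnit (Nat.sub_le n μ) R hRtri hRinv
  have hR₀H : IsUnit R₀ᴴ := by
    rw [Matrix.isUnit_iff_isUnit_det] at hR₀ ⊢
    rw [Matrix.det_conjTranspose]
    exact hR₀.star
  have hinj : Function.Injective (R₀ᴴ.mulVec) := Matrix.mulVec_injective_iff_isUnit.2 hR₀H
  -- Gminusᴴ *ᵥ r = R₀ᴴ *ᵥ (Qminusᴴ *ᵥ r)
  have hGHr : Gminusᴴ.mulVec r = R₀ᴴ.mulVec (Qminusᴴ.mulVec r) := by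
    rw [hfac, Matrix.conjTranspose_mul, Matrix.mulVec_mulVec]
  have h3 : Qminusᴴ.mulVec r = 0 ↔ Gminusᴴ.mulVec r = 0 := by
    rw [hGHr]
    constructor
    · intro h; rw [h, Matrix.mulVec_zero]
    · intro h
      apply hinj
      rw [h, Matrix.mulVec_zero]
  rw [h1, h2, h3]
  tauto
end
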